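/- Let P and Q be probability measures on ℝ with finite second moments, with means μ₁ := ∫ x dP(x), μ₂ := ∫ y dQ(y) and standard deviations σ₁, σ₂ (the nonnegative square roots of their variances). Then for every coupling ψ of P and Q, ∫_{ℝ×ℝ} (x − y)² dψ(x, y) ≥ (μ₁ − μ₂)² + (σ₁ − σ₂)². -/

import Mathlib

open MeasureTheory

/-- Elementary Cauchy–Schwarz for integrals of real functions. -/
lemma integral_mul_le_sqrt_mul_sqrt {α : Type*} [MeasurableSpace α] {μ : Measure α}
    {f g : α → ℝ} (hf : Integrable (fun a => f a ^ 2) μ)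
    (hg : Integrable (fun a => g a ^ 2) μ) (hfg : Integrable (fun a => f a * g a) μ) :
    ∫ a, f a * g a ∂μ ≤ Real.sqrt (∫ a, f a ^ 2 ∂μ) * Real.sqrt (∫ a, g a ^ 2 ∂μ) := by
  set A := ∫ a, f a ^ 2 ∂μ with hA
  set B := ∫ a, g a ^ 2 ∂μ with hB
  have hA0 : 0 ≤ A := integral_nonneg fun a => sq_nonneg _
  have hB0 : 0 ≤ B := integral_nonneg fun a => sq_nonneg _
  rcases eq_or_lt_of_le hA0 with hA0' | hApos
  · -- A = 0 : f = 0 a.e.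
    have hfe : (fun a => f a ^ 2) =ᵐ[μ] 0 :=
      (integral_eq_zero_iff_of_nonneg (fun a => sq_nonneg _) hf).mp hA0'.symm
    have : (fun a => f a * g a) =ᵐ[μ] 0 := by
      filter_upwards [hfe] with a ha
      have : f a = 0 := by
        have := ha
        simp only [Pi.zero_apply] at this
        nlinarith [sq_nonneg (f a)]
      simp [this]
    rw [integral_congr_ae this]
    simp [← hA0', mul_nonneg, Real.sqrt_nonneg]
  rcases eq_or_lt_of_le hB0 with hB0' | hBpos
  · have hge : (fun a => g a ^ 2) =ᵐ[μ] 0 :=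
      (integral_eq_zero_iff_of_nonneg (fun a => sq_nonneg _) hg).mp hB0'.symm
    have : (fun a => f a * g a) =ᵐ[μ] 0 := by
      filter_upwards [hge] with a ha
      have : g a = 0 := by
        have := ha
        simp only [Pi.zero_apply] at this
        nlinarith [sq_nonneg (g a)]
      simp [this]
    rw [integral_congr_ae this]
    simp [← hB0', mul_nonneg, Real.sqrt_nonneg]
  -- A > 0, B > 0
  set sA := Real.sqrt A with hsA
  set sB := Real.sqrt B with hsB
  have hsApos : 0 < sA := Real.sqrt_pos.mpr hApos
  have hsBpos : 0 < sB := Real.sqrt_pos.mpr hBpos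
  have hsA2 : sA ^ 2 = A := Real.sq_sqrt hA0
  have hsB2 : sB ^ 2 = B := Real.sq_sqrt hB0
  have hpt : ∀ a, f a * g a ≤ (B * f a ^ 2 + A * g a ^ 2) / (2 * sA * sB) := by
    intro a
    have h2 : 0 < 2 * sA * sB := by positivity
    rw [le_div_iff₀ h2]
    nlinarith [sq_nonneg (sB * f a - sA * g a), hsA2, hsB2]
  have hint : Integrable (fun a => (B * f a ^ 2 + A * g a ^ 2) / (2 * sA * sB)) μ :=
    ((hf.const_mul B).add (hg.const_mul A)).div_const _
  have hle := integral_mono hfg hint hpt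
  have hR : ∫ a, (B * f a ^ 2 + A * g a ^ 2) / (2 * sA * sB) ∂μ = sA * sB := by
    rw [integral_div, integral_add (hf.const_mul B) (hg.const_mul A),
      integral_const_mul, integral_const_mul, ← hA, ← hB]
    have hne : (2 * sA * sB) ≠ 0 := by positivity
    field_simp
    nlinarith [hsA2, hsB2]
  linarith [hle, hR.le, hR.ge]

/-- One-dimensional Gelbrich bound (Lemma 1): for probability measures `P, Q` on `ℝ`
with finite second moments, means `μ₁, μ₂` and standard deviations `σ₁, σ₂`, every
coupling `ψ` of `P` and `Q` satisfies
`∫ (x − y)² dψ(x, y) ≥ (μ₁ − μ₂)² + (σ₁ − σ₂)²`. -/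
theorem gelbrich_bound_one_dim
    (P Q : Measure ℝ) [IsProbabilityMeasure P] [IsProbabilityMeasure Q]
    (hP2 : Integrable (fun x => x ^ 2) P) (hQ2 : Integrable (fun x => x ^ 2) Q)
    (μ₁ μ₂ σ₁ σ₂ : ℝ)
    (hμ₁ : μ₁ = ∫ x, x ∂P) (hμ₂ : μ₂ = ∫ y, y ∂Q)
    (hσ₁ : σ₁ = Real.sqrt (∫ x, (x - μ₁) ^ 2 ∂P))
    (hσ₂ : σ₂ = Real.sqrt (∫ y, (y - μ₂) ^ 2 ∂Q))
    (ψ : Measure (ℝ × ℝ)) [IsProbabilityMeasure ψ]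
    (hψ₁ : ψ.map Prod.fst = P) (hψ₂ : ψ.map Prod.snd = Q) :
    (μ₁ - μ₂) ^ 2 + (σ₁ - σ₂) ^ 2 ≤ ∫ z, (z.1 - z.2) ^ 2 ∂ψ := by
  have hfstm : AEMeasurable (Prod.fst : ℝ × ℝ → ℝ) ψ := measurable_fst.aemeasurable
  have hsndm : AEMeasurable (Prod.snd : ℝ × ℝ → ℝ) ψ := measurable_snd.aemeasurable
  -- second moments under ψ
  have h1 : Integrable (fun z : ℝ × ℝ => z.1 ^ 2) ψ := by
    have := (integrable_map_measure
      (measurable_id.pow_const 2).aestronglyMeasurable hfstm).mp (hψ₁ ▸ hP2)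
    exact this
  have h2 : Integrable (fun z : ℝ × ℝ => z.2 ^ 2) ψ := by
    have := (integrable_map_measure
      (measurable_id.pow_const 2).aestronglyMeasurable hsndm).mp (hψ₂ ▸ hQ2)
    exact this
  -- first moments under ψ
  have hI1 : Integrable (fun z : ℝ × ℝ => z.1) ψ :=
    ((memLp_two_iff_integrable_sq measurable_fst.aestronglyMeasurable).mpr h1).integrable
      one_le_two
  have hI2 : Integrable (fun z : ℝ × ℝ => z.2) ψ :=
    ((memLp_two_iff_integrable_sq measurable_snd.aestronglyMeasurable).mpr h2).integrable
      one_le_two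
  -- centered integrabilities
  have hu1 : Integrable (fun z : ℝ × ℝ => z.1 - μ₁) ψ := hI1.sub (integrable_const μ₁)
  have hv1 : Integrable (fun z : ℝ × ℝ => z.2 - μ₂) ψ := hI2.sub (integrable_const μ₂)
  have hu2 : Integrable (fun z : ℝ × ℝ => (z.1 - μ₁) ^ 2) ψ := by
    have heq : (fun z : ℝ × ℝ => (z.1 - μ₁) ^ 2)
        = fun z => z.1 ^ 2 - (2 * μ₁) * z.1 + μ₁ ^ 2 := by funext z; ring
    rw [heq]; exact (h1.sub (hI1.const_mul _)).add (integrable_const _)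
  have hv2 : Integrable (fun z : ℝ × ℝ => (z.2 - μ₂) ^ 2) ψ := by
    have heq : (fun z : ℝ × ℝ => (z.2 - μ₂) ^ 2)
        = fun z => z.2 ^ 2 - (2 * μ₂) * z.2 + μ₂ ^ 2 := by funext z; ring
    rw [heq]; exact (h2.sub (hI2.const_mul _)).add (integrable_const _)
  have huv : Integrable (fun z : ℝ × ℝ => (z.1 - μ₁) * (z.2 - μ₂)) ψ := by
    refine Integrable.mono' ((hu2.add hv2).div_const 2) ?_ ?_
    · exact ((measurable_fst.sub measurable_const).mul
        (measurable_snd.sub measurable_const)).aestronglyMeasurable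
    · refine Filter.Eventually.of_forall fun z => ?_
      rw [Real.norm_eq_abs, abs_le]
      simp only [Pi.add_apply]
      constructor <;>
        nlinarith [sq_nonneg (z.1 - μ₁ + (z.2 - μ₂)), sq_nonneg (z.1 - μ₁ - (z.2 - μ₂))]
  -- means under ψ
  have hmu1 : ∫ z : ℝ × ℝ, z.1 ∂ψ = μ₁ := by
    rw [hμ₁, ← hψ₁]
    exact (integral_map hfstm measurable_id.aestronglyMeasurable).symm
  have hmu2 : ∫ z : ℝ × ℝ, z.2 ∂ψ = μ₂ := by
    rw [hμ₂, ← hψ₂]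
    exact (integral_map hsndm measurable_id.aestronglyMeasurable).symm
  have hu0 : ∫ z : ℝ × ℝ, (z.1 - μ₁) ∂ψ = 0 := by
    rw [integral_sub hI1 (integrable_const _), hmu1, integral_const]
    simp
  have hv0 : ∫ z : ℝ × ℝ, (z.2 - μ₂) ∂ψ = 0 := by
    rw [integral_sub hI2 (integrable_const _), hmu2, integral_const]
    simp
  -- variances transfer
  have hvar1 : ∫ z : ℝ × ℝ, (z.1 - μ₁) ^ 2 ∂ψ = ∫ x, (x - μ₁) ^ 2 ∂P := by
    rw [← hψ₁]
    exact (integral_map hfstm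
      ((measurable_id.sub measurable_const).pow_const 2).aestronglyMeasurable).symm
  have hvar2 : ∫ z : ℝ × ℝ, (z.2 - μ₂) ^ 2 ∂ψ = ∫ y, (y - μ₂) ^ 2 ∂Q := by
    rw [← hψ₂]
    exact (integral_map hsndm
      ((measurable_id.sub measurable_const).pow_const 2).aestronglyMeasurable).symm
  have hσ₁' : σ₁ = Real.sqrt (∫ z : ℝ × ℝ, (z.1 - μ₁) ^ 2 ∂ψ) := by rw [hσ₁, hvar1]
  have hσ₂' : σ₂ = Real.sqrt (∫ z : ℝ × ℝ, (z.2 - μ₂) ^ 2 ∂ψ) := by rw [hσ₂, hvar2]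
  have hσ₁sq : σ₁ ^ 2 = ∫ z : ℝ × ℝ, (z.1 - μ₁) ^ 2 ∂ψ := by
    rw [hσ₁']; exact Real.sq_sqrt (integral_nonneg fun z => sq_nonneg _)
  have hσ₂sq : σ₂ ^ 2 = ∫ z : ℝ × ℝ, (z.2 - μ₂) ^ 2 ∂ψ := by
    rw [hσ₂']; exact Real.sq_sqrt (integral_nonneg fun z => sq_nonneg _)
  -- Cauchy–Schwarz
  have hCS : ∫ z : ℝ × ℝ, (z.1 - μ₁) * (z.2 - μ₂) ∂ψ ≤ σ₁ * σ₂ := by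
    rw [hσ₁', hσ₂']
    exact integral_mul_le_sqrt_mul_sqrt hu2 hv2 huv
  -- expansion
  have hexp : (fun z : ℝ × ℝ => (z.1 - z.2) ^ 2)
      = fun z : ℝ × ℝ => (z.1 - μ₁) ^ 2 + (z.2 - μ₂) ^ 2 + (μ₁ - μ₂) ^ 2
          - 2 * ((z.1 - μ₁) * (z.2 - μ₂))
          + (2 * (μ₁ - μ₂)) * (z.1 - μ₁) - (2 * (μ₁ - μ₂)) * (z.2 - μ₂) := by
    funext z; ring
  have i5 : Integrable (fun z : ℝ × ℝ => (z.1 - μ₁) ^ 2 + (z.2 - μ₂) ^ 2) ψ := hu2.add hv2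
  have i4 : Integrable
      (fun z : ℝ × ℝ => (z.1 - μ₁) ^ 2 + (z.2 - μ₂) ^ 2 + (μ₁ - μ₂) ^ 2) ψ :=
    i5.add (integrable_const _)
  have i3 : Integrable (fun z : ℝ × ℝ => (z.1 - μ₁) ^ 2 + (z.2 - μ₂) ^ 2 + (μ₁ - μ₂) ^ 2
      - 2 * ((z.1 - μ₁) * (z.2 - μ₂))) ψ := i4.sub (huv.const_mul 2)
  have i2 : Integrable (fun z : ℝ × ℝ => (z.1 - μ₁) ^ 2 + (z.2 - μ₂) ^ 2 + (μ₁ - μ₂) ^ 2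
      - 2 * ((z.1 - μ₁) * (z.2 - μ₂)) + (2 * (μ₁ - μ₂)) * (z.1 - μ₁)) ψ :=
    i3.add (hu1.const_mul _)
  have hkey : ∫ z : ℝ × ℝ, (z.1 - z.2) ^ 2 ∂ψ
      = (∫ z : ℝ × ℝ, (z.1 - μ₁) ^ 2 ∂ψ) + (∫ z : ℝ × ℝ, (z.2 - μ₂) ^ 2 ∂ψ)
        + (μ₁ - μ₂) ^ 2 - 2 * ∫ z : ℝ × ℝ, (z.1 - μ₁) * (z.2 - μ₂) ∂ψ := by
    rw [hexp, integral_sub i2 (hv1.const_mul _), integral_add i3 (hu1.const_mul _),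
      integral_sub i4 (huv.const_mul 2), integral_add i5 (integrable_const _),
      integral_add hu2 hv2, integral_const_mul, integral_const_mul, integral_const_mul,
      hu0, hv0, integral_const]
    simp
  rw [hkey, ← hσ₁sq, ← hσ₂sq]
  nlinarith [hCS]
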